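/- Let G = (V,E) be a finite simple graph and define the relaxed independent set game by γ̂(F) = α(G[F]) for F ⊆ E, where G[F] is the subgraph induced by the edge set F (its vertices are the endpoints of edges in F). Then γ̂ is supermodular (γ̂(S) + γ̂(T) ≤ γ̂(S ∩ T) + γ̂(S ∪ T) for all S, T ⊆ E) if and only if G contains no subgraph isomorphic to K₃ and no subgraph isomorphic to P₄ (the path on 4 vertices). -/

import Mathlib

/-- The vertex set of the edge-induced subgraph `G[F]`: endpoints of edges in `F`. -/
def edgeVerts {V : Type*} (F : Set (Sym2 V)) : Set V := {v | ∃ e ∈ F, v ∈ e}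

/-- `gammaHat F = α(G[F])`: the maximum size of a set of endpoints of edges of `F`
no two of which are joined by an edge of `F`. -/
noncomputable def gammaHat {V : Type*} [Fintype V] (F : Set (Sym2 V)) : ℕ :=
  sSup {n | ∃ s : Finset V, ↑s ⊆ edgeVerts F ∧
    (∀ u ∈ s, ∀ v ∈ s, s(u, v) ∉ F) ∧ s.card = n}

/-- `G` contains a subgraph isomorphic to the triangle `K₃`. -/
def HasK3 {V : Type*} (G : SimpleGraph V) : Prop :=
  ∃ a b c : V, a ≠ b ∧ a ≠ c ∧ b ≠ c ∧ G.Adj a b ∧ G.Adj b c ∧ G.Adj a c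

/-- `G` contains a subgraph isomorphic to the path `P₄` on four vertices. -/
def HasP4 {V : Type*} (G : SimpleGraph V) : Prop :=
  ∃ a b c d : V, a ≠ b ∧ a ≠ c ∧ a ≠ d ∧ b ≠ c ∧ b ≠ d ∧ c ≠ d ∧
    G.Adj a b ∧ G.Adj b c ∧ G.Adj c d

lemma le_gammaHat {V : Type*} [Fintype V] {F : Set (Sym2 V)} (s : Finset V)
    (h1 : ↑s ⊆ edgeVerts F) (h2 : ∀ u ∈ s, ∀ v ∈ s, s(u, v) ∉ F) :
    s.card ≤ gammaHat F := by
  apply le_csSup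
  · exact ⟨Fintype.card V, by rintro n ⟨t, -, -, rfl⟩; exact t.card_le_univ⟩
  · exact ⟨s, h1, h2, rfl⟩

lemma gammaHat_le {V : Type*} [Fintype V] {F : Set (Sym2 V)} {m : ℕ}
    (h : ∀ s : Finset V, ↑s ⊆ edgeVerts F → (∀ u ∈ s, ∀ v ∈ s, s(u, v) ∉ F) →
      s.card ≤ m) :
    gammaHat F ≤ m := by
  apply csSup_le
  · exact ⟨0, ∅, by simp [edgeVerts], by simp, rfl⟩
  · rintro n ⟨s, h1, h2, rfl⟩; exact h s h1 h2

/-- Lower bound 2 via two nonadjacent endpoints. -/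
lemma two_le_gammaHat {V : Type*} [Fintype V] {G : SimpleGraph V} {F : Set (Sym2 V)}
    (hFE : F ⊆ G.edgeSet) {x y : V} (hxy : x ≠ y)
    (hx : x ∈ edgeVerts F) (hy : y ∈ edgeVerts F) (hnot : s(x, y) ∉ F) :
    2 ≤ gammaHat F := by
  classical
  have hcard : ({x, y} : Finset V).card = 2 := by
    rw [Finset.card_insert_of_notMem (by simpa using hxy), Finset.card_singleton]
  calc 2 = ({x, y} : Finset V).card := hcard.symm
    _ ≤ gammaHat F := by
      apply le_gammaHat
      · intro v hv
        simp only [Finset.coe_insert, Finset.coe_singleton, Set.mem_insert_iff,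
          Set.mem_singleton_iff] at hv
        rcases hv with rfl | rfl
        · exact hx
        · exact hy
      · intro u hu v hv
        simp only [Finset.mem_insert, Finset.mem_singleton] at hu hv
        intro hmem
        have hadj := hFE hmem
        rw [SimpleGraph.mem_edgeSet] at hadj
        rcases hu with rfl | rfl <;> rcases hv with rfl | rfl
        · exact hadj.ne rfl
        · exact hnot hmem
        · exact hnot (Sym2.eq_swap ▸ hmem)
        · exact hadj.ne rfl

/-- If any two distinct endpoints are adjacent, `γ̂ ≤ 1`. -/
lemma gammaHat_le_one {V : Type*} [Fintype V] {F : Set (Sym2 V)}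
    (h : ∀ u v, u ∈ edgeVerts F → v ∈ edgeVerts F → u ≠ v → s(u, v) ∈ F) :
    gammaHat F ≤ 1 := by
  apply gammaHat_le
  intro s h1 h2
  rw [Finset.card_le_one]
  intro u hu v hv
  by_contra huv
  exact h2 u hu v hv (h u v (h1 hu) (h1 hv) huv)

/-- Always `γ̂(F) ≤ |F|`. -/
lemma gammaHat_le_card {V : Type*} [Fintype V] (F : Set (Sym2 V)) :
    gammaHat F ≤ (Set.toFinite F).toFinset.card := by
  classical
  apply gammaHat_le
  intro s h1 h2
  have hf : ∀ v ∈ s, ∃ e, e ∈ F ∧ v ∈ e := by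
    intro v hv
    exact (h1 hv : v ∈ edgeVerts F)
  set f : V → Sym2 V := fun v => if h : ∃ e, e ∈ F ∧ v ∈ e then h.choose else s(v, v) with hfdef
  have hspec : ∀ v ∈ s, f v ∈ F ∧ v ∈ f v := by
    intro v hv
    have h := hf v hv
    simp only [hfdef, dif_pos h]
    exact h.choose_spec
  apply Finset.card_le_card_of_injOn f
  · intro v hv
    simp only [Finset.mem_coe, Set.Finite.mem_toFinset]
    exact (hspec v hv).1
  · intro u hu v hv heq
    by_contra huv
    have h1' := hspec u hu
    have h2' := hspec v hv
    have : f u = s(u, v) := (Sym2.mem_and_mem_iff huv).mp ⟨h1'.2, heq ▸ h2'.2⟩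
    exact h2 u hu v hv (this ▸ h1'.1)

/-- In a `K₃`-free, `P₄`-free graph, every edge has a pendant endpoint. -/
lemma pendant {V : Type*} {G : SimpleGraph V}
    (hK : ¬ HasK3 G) (hP : ¬ HasP4 G) {e : Sym2 V} (he : e ∈ G.edgeSet) :
    ∃ v ∈ e, ∀ f ∈ G.edgeSet, v ∈ f → f = e := by
  induction e with
  | _ a b =>
    rw [SimpleGraph.mem_edgeSet] at he
    by_contra hcon
    push_neg at hcon
    obtain ⟨f, hfE, haf, hfe⟩ := hcon a (Sym2.mem_mk_left a b)
    obtain ⟨g, hgE, hbg, hge⟩ := hcon b (Sym2.mem_mk_right a b)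
    obtain ⟨x, rfl⟩ := Sym2.mem_iff_exists.mp haf
    obtain ⟨y, rfl⟩ := Sym2.mem_iff_exists.mp hbg
    rw [SimpleGraph.mem_edgeSet] at hfE hgE
    have hab : a ≠ b := he.ne
    have hax : a ≠ x := hfE.ne
    have hby : b ≠ y := hgE.ne
    have hxb : x ≠ b := by rintro rfl; exact hfe rfl
    have hya : y ≠ a := by
      rintro rfl
      exact hge (Sym2.eq_swap)
    by_cases hxy : x = y
    · subst hxy
      exact hK ⟨a, b, x, hab, hax, hxb.symm, he, hgE, hfE⟩
    · exact hP ⟨x, a, b, y, hax.symm, hxb, hxy, hab, hya.symm, hby,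
        hfE.symm, he, hgE⟩

/-- In a `K₃`-free, `P₄`-free graph, `γ̂(F) = |F|` for every `F ⊆ E`. -/
lemma gammaHat_eq_card {V : Type*} [Fintype V] {G : SimpleGraph V}
    (hK : ¬ HasK3 G) (hP : ¬ HasP4 G) {F : Set (Sym2 V)} (hF : F ⊆ G.edgeSet) :
    gammaHat F = (Set.toFinite F).toFinset.card := by
  classical
  refine le_antisymm (gammaHat_le_card F) ?_
  have hleaf : ∀ e ∈ (Set.toFinite F).toFinset, ∃ v ∈ e, ∀ f ∈ G.edgeSet, v ∈ f → f = e := by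
    intro e he
    rw [Set.Finite.mem_toFinset] at he
    exact pendant hK hP (hF he)
  choose leaf hleafmem hleafuniq using hleaf
  set s : Finset V := (Set.toFinite F).toFinset.attach.image (fun x => leaf x.1 x.2) with hs
  have hmemF : ∀ (x : {e // e ∈ (Set.toFinite F).toFinset}), (x : Sym2 V) ∈ F := by
    intro x
    have := x.2
    rwa [Set.Finite.mem_toFinset] at this
  have hinj : ∀ (x y : {e // e ∈ (Set.toFinite F).toFinset}),
      leaf x.1 x.2 = leaf y.1 y.2 → x = y := by
    intro x y hxy
    have h1 : leaf x.1 x.2 ∈ (y : Sym2 V) := hxy ▸ hleafmem y.1 y.2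
    have h2 : (y : Sym2 V) = x.1 := hleafuniq x.1 x.2 y.1 (hF (hmemF y)) h1
    exact Subtype.ext h2.symm
  have hcard : s.card = (Set.toFinite F).toFinset.card := by
    rw [hs, Finset.card_image_of_injective _ fun x y => hinj x y, Finset.card_attach]
  rw [← hcard]
  apply le_gammaHat
  · intro v hv
    rw [hs, Finset.coe_image] at hv
    obtain ⟨x, -, rfl⟩ := hv
    exact ⟨x.1, hmemF x, hleafmem x.1 x.2⟩
  · intro u hu v hv hmem
    rw [hs, Finset.mem_image] at hu hv
    obtain ⟨x, -, rfl⟩ := hu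
    obtain ⟨y, -, rfl⟩ := hv
    have hE : s(leaf x.1 x.2, leaf y.1 y.2) ∈ G.edgeSet := hF hmem
    have h1 : s(leaf x.1 x.2, leaf y.1 y.2) = x.1 :=
      hleafuniq x.1 x.2 _ hE (Sym2.mem_mk_left _ _)
    have h2 : s(leaf x.1 x.2, leaf y.1 y.2) = y.1 :=
      hleafuniq y.1 y.2 _ hE (Sym2.mem_mk_right _ _)
    have hxy : x = y := Subtype.ext (h1.symm.trans h2)
    subst hxy
    rw [SimpleGraph.mem_edgeSet] at hE
    exact hE.ne rfl

lemma gammaHat_singleton_le_one {V : Type*} [Fintype V] (x y : V) : gammaHat {s(x, y)} ≤ 1 := by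
  apply gammaHat_le_one
  rintro u v ⟨e, rfl, hue⟩ ⟨f, rfl, hvf⟩ huv
  exact Set.mem_singleton_iff.mpr ((Sym2.mem_and_mem_iff huv).mp ⟨hue, hvf⟩).symm

lemma triangle_violation {V : Type*} [Fintype V] {G : SimpleGraph V}
    (hsup : ∀ S T : Set (Sym2 V), S ⊆ G.edgeSet → T ⊆ G.edgeSet →
        gammaHat S + gammaHat T ≤ gammaHat (S ∩ T) + gammaHat (S ∪ T))
    (a b c : V) (hab : a ≠ b) (hac : a ≠ c) (hbc : b ≠ c)
    (eab : G.Adj a b) (ebc : G.Adj b c) (eac : G.Adj a c) : False := by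
  set S : Set (Sym2 V) := {s(a, b), s(b, c)} with hSdef
  set T : Set (Sym2 V) := {s(b, c), s(a, c)} with hTdef
  have hS : S ⊆ G.edgeSet := by rintro e (rfl | rfl); exacts [eab, ebc]
  have hT : T ⊆ G.edgeSet := by rintro e (rfl | rfl); exacts [ebc, eac]
  have h2S : 2 ≤ gammaHat S := by
    refine two_le_gammaHat hS hac ⟨s(a, b), Or.inl rfl, Sym2.mem_mk_left _ _⟩
      ⟨s(b, c), Or.inr rfl, Sym2.mem_mk_right _ _⟩ ?_
    simp [hSdef, Sym2.eq_iff, hab, hac, hbc, hab.symm, hac.symm, hbc.symm]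
  have h2T : 2 ≤ gammaHat T := by
    refine two_le_gammaHat hT hab ⟨s(a, c), Or.inr rfl, Sym2.mem_mk_left _ _⟩
      ⟨s(b, c), Or.inl rfl, Sym2.mem_mk_left _ _⟩ ?_
    simp [hTdef, Sym2.eq_iff, hab, hac, hbc, hab.symm, hac.symm, hbc.symm]
  have hSTeq : S ∩ T = {s(b, c)} := by
    apply Set.eq_singleton_iff_unique_mem.mpr
    refine ⟨⟨Or.inr rfl, Or.inl rfl⟩, ?_⟩
    rintro e ⟨(rfl | rfl), hT'⟩
    · exfalso
      rcases hT' with h | h <;>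
        simp_all [Sym2.eq_iff]
    · rfl
  have hI : gammaHat (S ∩ T) ≤ 1 := by
    rw [hSTeq]; exact gammaHat_singleton_le_one _ _
  have hU : gammaHat (S ∪ T) ≤ 1 := by
    apply gammaHat_le_one
    rintro u v ⟨e, he, hue⟩ ⟨f, hf, hvf⟩ huv
    have hu' : u = a ∨ u = b ∨ u = c := by
      rcases he with (rfl | rfl) | (rfl | rfl) <;>
        rcases Sym2.mem_iff.mp hue with rfl | rfl <;> tauto
    have hv' : v = a ∨ v = b ∨ v = c := by
      rcases hf with (rfl | rfl) | (rfl | rfl) <;>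
        rcases Sym2.mem_iff.mp hvf with rfl | rfl <;> tauto
    rcases hu' with rfl | rfl | rfl <;> rcases hv' with rfl | rfl | rfl <;>
      first
        | exact absurd rfl huv
        | simp [hSdef, hTdef, Sym2.eq_iff]
  have := hsup S T hS hT
  omega

lemma p4_violation {V : Type*} [Fintype V] {G : SimpleGraph V}
    (hsup : ∀ S T : Set (Sym2 V), S ⊆ G.edgeSet → T ⊆ G.edgeSet →
        gammaHat S + gammaHat T ≤ gammaHat (S ∩ T) + gammaHat (S ∪ T))
    (a b c d : V) (hab : a ≠ b) (hac : a ≠ c) (had : a ≠ d)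
    (hbc : b ≠ c) (hbd : b ≠ d) (hcd : c ≠ d)
    (eab : G.Adj a b) (ebc : G.Adj b c) (ecd : G.Adj c d) : False := by
  classical
  set S : Set (Sym2 V) := {s(a, b), s(b, c)} with hSdef
  set T : Set (Sym2 V) := {s(b, c), s(c, d)} with hTdef
  have hS : S ⊆ G.edgeSet := by rintro e (rfl | rfl); exacts [eab, ebc]
  have hT : T ⊆ G.edgeSet := by rintro e (rfl | rfl); exacts [ebc, ecd]
  have h2S : 2 ≤ gammaHat S := by
    refine two_le_gammaHat hS hac ⟨s(a, b), Or.inl rfl, Sym2.mem_mk_left _ _⟩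
      ⟨s(b, c), Or.inr rfl, Sym2.mem_mk_right _ _⟩ ?_
    simp [hSdef, Sym2.eq_iff, hab, hac, hbc, hab.symm, hac.symm, hbc.symm]
  have h2T : 2 ≤ gammaHat T := by
    refine two_le_gammaHat hT hbd ⟨s(b, c), Or.inl rfl, Sym2.mem_mk_left _ _⟩
      ⟨s(c, d), Or.inr rfl, Sym2.mem_mk_right _ _⟩ ?_
    simp [hTdef, Sym2.eq_iff, hbc, hbd, hcd, hbc.symm, hbd.symm, hcd.symm]
  have hSTeq : S ∩ T = {s(b, c)} := by
    apply Set.eq_singleton_iff_unique_mem.mpr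
    refine ⟨⟨Or.inr rfl, Or.inl rfl⟩, ?_⟩
    rintro e ⟨(rfl | rfl), hT'⟩
    · exfalso
      rcases hT' with h | h <;> simp_all [Sym2.eq_iff]
    · rfl
  have hI : gammaHat (S ∩ T) ≤ 1 := by
    rw [hSTeq]; exact gammaHat_singleton_le_one _ _
  have m1 : s(a, b) ∈ S ∪ T := Or.inl (Or.inl rfl)
  have m3 : s(c, d) ∈ S ∪ T := Or.inr (Or.inr rfl)
  have hverts : ∀ w ∈ edgeVerts (S ∪ T), w = a ∨ w = b ∨ w = c ∨ w = d := by
    rintro w ⟨e, he, hwe⟩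
    rcases he with (rfl | rfl) | (rfl | rfl) <;>
      rcases Sym2.mem_iff.mp hwe with rfl | rfl <;> tauto
  have hU : gammaHat (S ∪ T) ≤ 2 := by
    refine gammaHat_le (V := V) (F := S ∪ T) (m := 2) fun s h1 h2 => ?_
    have key : Set.InjOn (fun v => if v = a ∨ v = b then true else false) ↑s := by
      intro u hu v hv heq
      by_contra huv
      have hu4 := hverts u (h1 hu)
      have hv4 := hverts v (h1 hv)
      by_cases hcu : u = a ∨ u = b <;> by_cases hcv : v = a ∨ v = b
      · rcases hcu with rfl | rfl <;> rcases hcv with rfl | rfl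
        · exact huv rfl
        · exact h2 u hu v hv m1
        · exact h2 u hu v hv (by rw [Sym2.eq_swap]; exact m1)
        · exact huv rfl
      · simp [hcu, hcv] at heq
      · simp [hcu, hcv] at heq
      · have hu' : u = c ∨ u = d := by tauto
        have hv' : v = c ∨ v = d := by tauto
        rcases hu' with rfl | rfl <;> rcases hv' with rfl | rfl
        · exact huv rfl
        · exact h2 u hu v hv m3
        · exact h2 u hu v hv (by rw [Sym2.eq_swap]; exact m3)
        · exact huv rfl
    calc s.card ≤ (Finset.univ : Finset Bool).card :=
          Finset.card_le_card_of_injOn _ (fun v _ => Finset.mem_univ _) key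
      _ = 2 := by simp
  have := hsup S T hS hT
  omega

theorem stmt10 {V : Type*} [Fintype V] (G : SimpleGraph V)
    (hiso : ∀ v : V, ∃ u, G.Adj v u) :
    (∀ S T : Set (Sym2 V), S ⊆ G.edgeSet → T ⊆ G.edgeSet →
        gammaHat S + gammaHat T ≤ gammaHat (S ∩ T) + gammaHat (S ∪ T)) ↔
      (¬ HasK3 G ∧ ¬ HasP4 G) := by
  classical
  constructor
  · intro hsup
    constructor
    · rintro ⟨a, b, c, hab, hac, hbc, eab, ebc, eac⟩
      exact triangle_violation hsup a b c hab hac hbc eab ebc eac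
    · rintro ⟨a, b, c, d, hab, hac, had, hbc, hbd, hcd, eab, ebc, ecd⟩
      exact p4_violation hsup a b c d hab hac had hbc hbd hcd eab ebc ecd
  · rintro ⟨hK, hP⟩ S T hS hT
    rw [gammaHat_eq_card hK hP hS, gammaHat_eq_card hK hP hT,
      gammaHat_eq_card hK hP (Set.inter_subset_left.trans hS),
      gammaHat_eq_card hK hP (Set.union_subset hS hT),
      Set.Finite.toFinset_inter, Set.Finite.toFinset_union,
      Finset.card_inter_add_card_union]
    all_goals exact Set.toFinite _
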